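/- The Volterra operator T on L²[0,1], defined by (Tf)(x) = ∫₀ˣ f(y) dy, satisfies T = C T* C where C is the conjugation (Cf)(x) = conj(f(1−x)); consequently T is a complex symmetric operator. -/

import Mathlib

open scoped ComplexConjugate
open MeasureTheory

/-- The Volterra operator is C-symmetric for the conjugation (Cf)(x) = conj(f(1-x)). -/
theorem volterra_complex_symmetric
    (μ : Measure ℝ) (hμ : μ = volume.restrict (Set.Icc (0 : ℝ) 1))
    (T : Lp ℂ 2 μ →L[ℂ] Lp ℂ 2 μ)
    (hT : ∀ f : Lp ℂ 2 μ, (T f : ℝ → ℂ) =ᵐ[μ] fun x => ∫ y in Set.Ioc (0 : ℝ) x, f y ∂μ)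
    (C : Lp ℂ 2 μ → Lp ℂ 2 μ)
    (hCadd : ∀ f g, C (f + g) = C f + C g)
    (hCsmul : ∀ (a : ℂ) (f), C (a • f) = conj a • C f)
    (hCiso : ∀ f g, inner (𝕜 := ℂ) (C f) (C g) = inner (𝕜 := ℂ) g f)
    (hCinv : ∀ f, C (C f) = f)
    (hC : ∀ f : Lp ℂ 2 μ, (C f : ℝ → ℂ) =ᵐ[μ] fun x => conj ((f : ℝ → ℂ) (1 - x))) :
    ∀ f : Lp ℂ 2 μ, T f = C (ContinuousLinearMap.adjoint T (C f)) := by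
  have hμfin : IsFiniteMeasure μ := by
    subst hμ
    constructor
    rw [Measure.restrict_apply_univ]
    simp [Real.volume_Icc]
  have hInt : ∀ h : Lp ℂ 2 μ, Integrable (h : ℝ → ℂ) μ :=
    fun h => (Lp.memLp h).integrable one_le_two
  -- the reflection map
  have hemb : MeasurableEmbedding (fun x : ℝ => 1 - x) :=
    (MeasurableEquiv.subLeft (1:ℝ)).measurableEmbedding
  have hpres : MeasurePreserving (fun x : ℝ => 1 - x) μ μ := by
    have h1 : MeasurePreserving (fun x : ℝ => 1 - x) volume volume :=
      Measure.measurePreserving_sub_left volume 1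
    have h2 := h1.restrict_preimage (s := Set.Icc (0:ℝ) 1) measurableSet_Icc
    have hs : (fun x : ℝ => 1 - x) ⁻¹' Set.Icc (0:ℝ) 1 = Set.Icc (0:ℝ) 1 := by
      ext x
      simp only [Set.mem_preimage, Set.mem_Icc]
      constructor <;> intro h <;> constructor <;> linarith [h.1, h.2]
    rw [hs] at h2
    rwa [← hμ] at h2
  -- a.e. positivity
  have hpos : ∀ᵐ y ∂μ, 0 < y ∧ y ≤ 1 := by
    rw [hμ, ae_restrict_iff' measurableSet_Icc]
    have hne : ∀ᵐ (y : ℝ) ∂volume, y ≠ 0 := by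
      rw [ae_iff]
      simp [measure_singleton]
    filter_upwards [hne] with y hy hmem
    exact ⟨lt_of_le_of_ne hmem.1 (Ne.symm hy), hmem.2⟩
  -- the key computation
  have key : ∀ u v : Lp ℂ 2 μ,
      (inner ℂ v (T u) : ℂ) = inner ℂ (C u) (T (C v)) := by
    intro u v
    rw [L2.inner_def, L2.inner_def]
    have hL : ∫ x, (inner ℂ ((v : ℝ → ℂ) x) ((T u : ℝ → ℂ) x) : ℂ) ∂μ
        = ∫ x, conj ((v : ℝ → ℂ) x) * (∫ y in Set.Ioc (0:ℝ) x, (u : ℝ → ℂ) y ∂μ) ∂μ := by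
      refine integral_congr_ae ?_
      filter_upwards [hT u] with x hx
      rw [RCLike.inner_apply, hx, mul_comm]
    have hsub : ∀ x : ℝ, (∫ y in Set.Ioc (0:ℝ) x, conj ((v : ℝ → ℂ) (1 - y)) ∂μ)
        = ∫ y in Set.Ico (1 - x) 1, conj ((v : ℝ → ℂ) y) ∂μ := by
      intro x
      have h := hpres.setIntegral_preimage_emb hemb
        (fun y => conj ((v : ℝ → ℂ) y)) (Set.Ico (1-x) 1)
      have hset : (fun y : ℝ => 1 - y) ⁻¹' Set.Ico (1 - x) 1 = Set.Ioc 0 x := by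
        ext y
        simp only [Set.mem_preimage, Set.mem_Ico, Set.mem_Ioc]
        constructor <;> intro h <;> constructor <;> linarith [h.1, h.2]
      rw [hset] at h
      exact h
    have hR : ∫ x, (inner ℂ ((C u : ℝ → ℂ) x) ((T (C v) : ℝ → ℂ) x) : ℂ) ∂μ
        = ∫ x, (u : ℝ → ℂ) (1 - x) * (∫ y in Set.Ico (1 - x) 1, conj ((v : ℝ → ℂ) y) ∂μ) ∂μ := by
      refine integral_congr_ae ?_
      filter_upwards [hC u, hT (C v)] with x hx1 hx2
      rw [RCLike.inner_apply, hx1, hx2, mul_comm]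
      simp only [Complex.conj_conj]
      congr 1
      rw [← hsub x]
      refine integral_congr_ae ?_
      exact (hC v).filter_mono (ae_mono Measure.restrict_le_self)
    have houter : ∫ x, (u : ℝ → ℂ) (1 - x) * (∫ y in Set.Ico (1 - x) 1, conj ((v : ℝ → ℂ) y) ∂μ) ∂μ
        = ∫ x, (u : ℝ → ℂ) x * (∫ y in Set.Ico x 1, conj ((v : ℝ → ℂ) y) ∂μ) ∂μ :=
      hpres.integral_comp hemb
        (fun x => (u : ℝ → ℂ) x * ∫ y in Set.Ico x 1, conj ((v : ℝ → ℂ) y) ∂μ)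
    rw [hL, hR, houter]
    -- now Fubini
    set F : ℝ × ℝ → ℂ := fun p =>
      Set.indicator {q : ℝ × ℝ | 0 < q.2 ∧ q.2 ≤ q.1}
        (fun q => conj ((v : ℝ → ℂ) q.1) * (u : ℝ → ℂ) q.2) p with hF
    have hS : MeasurableSet {q : ℝ × ℝ | 0 < q.2 ∧ q.2 ≤ q.1} :=
      (measurableSet_lt measurable_const measurable_snd).inter
        (measurableSet_le measurable_snd measurable_fst)
    have hFint : Integrable F (μ.prod μ) := by
      refine Integrable.indicator ?_ hS
      exact Integrable.mul_prod
        ((LinearIsometryEquiv.integrable_comp_iff Complex.conjLIE).2 (hInt v)) (hInt u)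
    have h1 : ∀ x : ℝ,
        conj ((v : ℝ → ℂ) x) * (∫ y in Set.Ioc (0:ℝ) x, (u : ℝ → ℂ) y ∂μ)
          = ∫ y, F (x, y) ∂μ := by
      intro x
      rw [← integral_const_mul, ← integral_indicator measurableSet_Ioc]
      refine integral_congr_ae (Filter.Eventually.of_forall fun y => ?_)
      simp [hF, Set.indicator_apply, Set.mem_Ioc, Set.mem_setOf_eq]
    have h2 : ∀ᵐ y ∂μ, (∫ x, F (x, y) ∂μ)
        = (u : ℝ → ℂ) y * ∫ x in Set.Ico y 1, conj ((v : ℝ → ℂ) x) ∂μ := by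
      filter_upwards [hpos] with y hy
      have hy0 : 0 < y := hy.1
      have e1 : ∀ x : ℝ, F (x, y)
          = Set.indicator (Set.Ici y) (fun x => conj ((v : ℝ → ℂ) x) * (u : ℝ → ℂ) y) x := by
        intro x
        simp [hF, Set.indicator_apply, Set.mem_setOf_eq, Set.mem_Ici, hy0]
      rw [integral_congr_ae (Filter.Eventually.of_forall e1), integral_indicator measurableSet_Ici]
      have hres : μ.restrict (Set.Ici y) = μ.restrict (Set.Ico y 1) := by
        rw [hμ, Measure.restrict_restrict measurableSet_Ici,
          Measure.restrict_restrict measurableSet_Ico]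
        refine Measure.restrict_congr_set ?_
        rw [Filter.eventuallyEq_set]
        have hnull : (volume : Measure ℝ) {(1:ℝ)} = 0 := measure_singleton 1
        rw [ae_iff]
        refine measure_mono_null ?_ hnull
        intro x hx
        simp only [Set.mem_setOf_eq, Set.mem_inter_iff, Set.mem_Ici, Set.mem_Ico,
          Set.mem_Icc] at hx
        simp only [Set.mem_singleton_iff]
        by_contra h1
        apply hx
        constructor
        · rintro ⟨hyx, h0, hle⟩
          exact ⟨⟨hyx, lt_of_le_of_ne hle h1⟩, h0, hle⟩
        · rintro ⟨⟨hyx, _⟩, h0, hle⟩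
          exact ⟨hyx, h0, hle⟩
      rw [hres, integral_mul_const, mul_comm]
    have h3 : ∫ x, ∫ y, F (x, y) ∂μ ∂μ = ∫ y, ∫ x, F (x, y) ∂μ ∂μ :=
      integral_integral_swap hFint
    calc ∫ x, conj ((v : ℝ → ℂ) x) * (∫ y in Set.Ioc (0:ℝ) x, (u : ℝ → ℂ) y ∂μ) ∂μ
        = ∫ x, ∫ y, F (x, y) ∂μ ∂μ := integral_congr_ae (Filter.Eventually.of_forall h1)
      _ = ∫ y, ∫ x, F (x, y) ∂μ ∂μ := h3
      _ = ∫ y, (u : ℝ → ℂ) y * ∫ x in Set.Ico y 1, conj ((v : ℝ → ℂ) x) ∂μ ∂μ :=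
          integral_congr_ae h2
  -- conclude
  intro f
  refine ext_inner_left ℂ fun w => ?_
  have h1 : (inner ℂ w (C (ContinuousLinearMap.adjoint T (C f))) : ℂ)
      = inner ℂ (C f) (T (C w)) := by
    conv_lhs => rw [← hCinv w]
    rw [hCiso, ContinuousLinearMap.adjoint_inner_left]
  rw [h1]
  exact key f w
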